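/- Let G be a finite solvable group and H a proper subgroup of G. Then H is a maximal subgroup of G if and only if H is a complement to some chief factor of G, i.e., if and only if there exist normal subgroups M < N of G such that no normal subgroup L of G satisfies M < L < N, and HN = G and H ∩ N = M. -/

import Mathlib

open Subgroup

/-- Commutator of a join with a normal subgroup. -/
lemma aux_commutator_sup {G : Type*} [Group G] (M A : Subgroup G) [M.Normal] :
    ⁅M ⊔ A, M ⊔ A⁆ ≤ M ⊔ ⁅A, A⁆ := by
  let f := QuotientGroup.mk' M
  have hker : f.ker = M := QuotientGroup.ker_mk' M
  have hmapM : Subgroup.map f M = ⊥ := (Subgroup.map_eq_bot_iff M).mpr hker.ge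
  calc ⁅M ⊔ A, M ⊔ A⁆ ≤ Subgroup.comap f (Subgroup.map f ⁅M ⊔ A, M ⊔ A⁆) :=
        Subgroup.le_comap_map f _
    _ = Subgroup.comap f (Subgroup.map f ⁅A, A⁆) := by
        rw [Subgroup.map_commutator, Subgroup.map_sup, hmapM, bot_sup_eq,
          Subgroup.map_commutator]
    _ = ⁅A, A⁆ ⊔ M := by rw [Subgroup.comap_map_eq, hker]
    _ = M ⊔ ⁅A, A⁆ := sup_comm _ _

/-- A subgroup contains its self-commutator. -/
lemma aux_commutator_self_le {G : Type*} [Group G] (N : Subgroup G) : ⁅N, N⁆ ≤ N :=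
  Subgroup.commutator_le.mpr fun a ha b hb =>
    N.mul_mem (N.mul_mem (N.mul_mem ha hb) (N.inv_mem ha)) (N.inv_mem hb)

/-- If `M` is normal and `M ⊔ ⁅N,N⁆ = N` in a solvable group, then `N ≤ M`. -/
lemma aux_solvable {G : Type*} [Group G] [Group.IsSolvable G] (M N : Subgroup G) [M.Normal]
    (h : M ⊔ ⁅N, N⁆ = N) : N ≤ M := by
  obtain ⟨n, hn⟩ := Group.IsSolvable.solvable (G := G)
  let c : ℕ → Subgroup G := fun k => (fun A => ⁅A, A⁆)^[k] N
  have hc0 : c 0 = N := rfl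
  have hcs : ∀ k, c (k + 1) = ⁅c k, c k⁆ := fun k => Function.iterate_succ_apply' _ _ _
  have hle : ∀ k, c k ≤ derivedSeries G k := by
    intro k
    induction k with
    | zero => simpa [hc0] using le_top
    | succ k ih => rw [hcs, derivedSeries_succ]; exact Subgroup.commutator_mono ih ih
  have key : ∀ k, N ≤ M ⊔ c k := by
    intro k
    induction k with
    | zero => rw [hc0]; exact le_sup_right
    | succ k ih =>
        have h1 : ⁅N, N⁆ ≤ ⁅M ⊔ c k, M ⊔ c k⁆ := Subgroup.commutator_mono ih ih
        have h2 : ⁅N, N⁆ ≤ M ⊔ c (k + 1) := by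
          rw [hcs]; exact h1.trans (aux_commutator_sup M (c k))
        conv_lhs => rw [← h]
        exact sup_le le_sup_left h2
  have hkey := key n
  have hbot : c n = ⊥ := le_bot_iff.mp (hn ▸ hle n)
  rwa [hbot, sup_bot_eq] at hkey

theorem maximal_iff_complement_to_chief_factor
    (G : Type*) [Group G] [Finite G] [Group.IsSolvable G] (H : Subgroup G) (hH : H ≠ ⊤) :
    IsCoatom H ↔
      ∃ M N : Subgroup G, M.Normal ∧ N.Normal ∧ M < N ∧
        (¬∃ L : Subgroup G, L.Normal ∧ M < L ∧ L < N) ∧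
        (∀ g : G, ∃ h ∈ H, ∃ n ∈ N, g = h * n) ∧ H ⊓ N = M := by
  constructor
  · rintro ⟨-, hmax⟩
    -- pick a minimal normal subgroup not contained in H
    set S : Set (Subgroup G) := {N | N.Normal ∧ ¬ N ≤ H} with hS
    have hSne : S.Nonempty := ⟨⊤, ⟨inferInstance, fun h => hH (top_le_iff.mp h)⟩⟩
    obtain ⟨N, hNS, hNmin⟩ := Set.Finite.exists_minimalFor id S (Set.toFinite S) hSne
    obtain ⟨hNnorm, hNnle⟩ := hNS
    have hmin : ∀ L ∈ S, ¬ L < N := fun L hL hlt => hlt.not_ge (hNmin hL hlt.le)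
    -- HN = G
    have hHN : H ⊔ N = ⊤ := hmax _ (lt_of_le_of_ne le_sup_left
      (fun h => hNnle (le_sup_right.trans h.ge)))
    have hprod : ∀ g : G, ∃ h ∈ H, ∃ n ∈ N, g = h * n := by
      intro g
      have hg : g ∈ ((H ⊔ N : Subgroup G) : Set G) := by rw [hHN]; trivial
      rw [Subgroup.mul_normal H N] at hg
      obtain ⟨h, hh, n, hn, hgn⟩ := hg
      exact ⟨h, hh, n, hn, hgn.symm⟩
    -- ⁅N,N⁆ ≤ H
    have hcommN : ⁅N, N⁆ ≤ N := aux_commutator_self_le N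
    have hcomm : ⁅N, N⁆ ≤ H := by
      by_contra hc
      have hcS : ⁅N, N⁆ ∈ S := ⟨Subgroup.commutator_normal N N, hc⟩
      have hceq : ⁅N, N⁆ = N := hcommN.lt_or_eq.resolve_left (hmin _ hcS)
      have : N ≤ (⊥ : Subgroup G) := aux_solvable ⊥ N (by rw [bot_sup_eq]; exact hceq)
      exact hNnle ((le_bot_iff.mp this).le.trans bot_le)
    refine ⟨H ⊓ N, N, ?_, hNnorm, ?_, ?_, hprod, rfl⟩
    · -- H ⊓ N is normal in G
      constructor
      intro m hm g
      obtain ⟨h, hh, n, hn, rfl⟩ := hprod g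
      have hmN : m ∈ N := hm.2
      have hnmn : n * m * n⁻¹ ∈ H ⊓ N := by
        constructor
        · have hcm : n * m * n⁻¹ * m⁻¹ ∈ ⁅N, N⁆ :=
            Subgroup.commutator_mem_commutator hn hmN
          have : n * m * n⁻¹ = (n * m * n⁻¹ * m⁻¹) * m := by group
          rw [this]
          exact H.mul_mem (hcomm hcm) hm.1
        · exact hNnorm.conj_mem m hmN n
      have : h * n * m * (h * n)⁻¹ = h * (n * m * n⁻¹) * h⁻¹ := by group
      rw [this]
      exact ⟨H.mul_mem (H.mul_mem hh hnmn.1) (H.inv_mem hh),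
        hNnorm.conj_mem _ hnmn.2 h⟩
    · -- H ⊓ N < N
      refine lt_of_le_of_ne inf_le_right fun h => hNnle ?_
      rw [← h]; exact inf_le_left
    · -- chief factor condition
      rintro ⟨L, hLnorm, hML, hLN⟩
      have hLnle : ¬ L ≤ H := fun hle =>
        hML.ne (le_antisymm hML.le (le_inf hle hLN.le))
      exact hmin L ⟨hLnorm, hLnle⟩ hLN
  · rintro ⟨M, N, hMnorm, hNnorm, hMN, hchief, hprod, hinf⟩
    refine ⟨hH, fun K hK => ?_⟩
    -- first: ⁅N,N⁆ ≤ M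
    have hcommN : ⁅N, N⁆ ≤ N := aux_commutator_self_le N
    have hcomm : ⁅N, N⁆ ≤ M := by
      have hLnorm : (M ⊔ ⁅N, N⁆).Normal := @Subgroup.sup_normal _ _ M ⁅N, N⁆ hMnorm
        (Subgroup.commutator_normal N N)
      have hLle : M ⊔ ⁅N, N⁆ ≤ N := sup_le hMN.le hcommN
      by_contra hc
      have hMlt : M < M ⊔ ⁅N, N⁆ :=
        lt_of_le_of_ne le_sup_left fun h => hc (le_sup_right.trans h.ge)
      have hLeq : M ⊔ ⁅N, N⁆ = N := by
        by_contra hne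
        exact hchief ⟨M ⊔ ⁅N, N⁆, hLnorm, hMlt, lt_of_le_of_ne hLle hne⟩
      have : N ≤ M := @aux_solvable _ _ _ M N hMnorm hLeq
      exact hMN.not_ge this
    -- P = K ⊓ N
    set P := K ⊓ N with hP
    have hMH : M ≤ H := hinf ▸ inf_le_left
    have hMP : M ≤ P := le_inf (hMH.trans hK.le) (hinf ▸ inf_le_right)
    have hMneP : M ≠ P := by
      intro heq
      apply hK.ne
      refine le_antisymm hK.le fun k hk => ?_
      obtain ⟨h, hh, n, hn, rfl⟩ := hprod k
      have hnK : n ∈ K := by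
        have : n = h⁻¹ * (h * n) := by group
        rw [this]; exact K.mul_mem (K.inv_mem (hK.le hh)) hk
      have hnM : n ∈ M := heq ▸ (⟨hnK, hn⟩ : n ∈ P)
      have hnH : n ∈ H := (hinf ▸ hnM : n ∈ H ⊓ N).1
      exact H.mul_mem hh hnH
    have hPnorm : P.Normal := by
      constructor
      intro x hx g
      obtain ⟨h, hh, n, hn, rfl⟩ := hprod g
      have hxN : x ∈ N := hx.2
      have hnxn : n * x * n⁻¹ ∈ P := by
        constructor
        · have hcm : n * x * n⁻¹ * x⁻¹ ∈ ⁅N, N⁆ :=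
            Subgroup.commutator_mem_commutator hn hxN
          have : n * x * n⁻¹ = (n * x * n⁻¹ * x⁻¹) * x := by group
          rw [this]
          exact K.mul_mem (hMP (hcomm hcm)).1 hx.1
        · exact hNnorm.conj_mem x hxN n
      have : h * n * x * (h * n)⁻¹ = h * (n * x * n⁻¹) * h⁻¹ := by group
      rw [this]
      exact ⟨K.mul_mem (K.mul_mem (hK.le hh) hnxn.1) (K.inv_mem (hK.le hh)),
        hNnorm.conj_mem _ hnxn.2 h⟩
    have hPN : P = N := by
      by_contra hne
      exact hchief ⟨P, hPnorm, lt_of_le_of_ne hMP hMneP,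
        lt_of_le_of_ne inf_le_right hne⟩
    have hNK : N ≤ K := hPN ▸ inf_le_left
    refine top_le_iff.mp fun g _ => ?_
    obtain ⟨h, hh, n, hn, rfl⟩ := hprod g
    exact K.mul_mem (hK.le hh) (hNK hn)
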